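/- Let ρ be twice differentiable and convex, ψ = ρ', and fix x ∈ ℝ. Then for c > 0, the function c ↦ ρ(prox_c(ρ)(x)) is differentiable with derivative ∂/∂c ρ(prox_c(ρ)(x)) = −ψ²(prox_c(ρ)(x)) / (1 + c·ψ'(prox_c(ρ)(x))). In particular, c ↦ ρ(prox_c(ρ)(x)) is nonincreasing in c on (0, ∞). -/

import Mathlib

noncomputable section

open Filter Topology

theorem statement13 (ρ : ℝ → ℝ) (hρconv : ConvexOn ℝ Set.univ ρ)
    (hρdiff : Differentiable ℝ ρ) (hρdiff2 : Differentiable ℝ (deriv ρ))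
    (x : ℝ)
    -- P c = prox_c(ρ)(x) : the unique y with y + c ψ(y) = x, for c > 0
    (P : ℝ → ℝ)
    (hP : ∀ c : ℝ, 0 < c → P c + c * deriv ρ (P c) = x) :
    -- the derivative formula in c
    (∀ c : ℝ, 0 < c →
      HasDerivAt (fun c => ρ (P c))
        (-(deriv ρ (P c)) ^ 2 / (1 + c * deriv (deriv ρ) (P c))) c) ∧
    -- c ↦ ρ(prox_c(ρ)(x)) is nonincreasing on (0, ∞)
    AntitoneOn (fun c => ρ (P c)) (Set.Ioi 0) := by
  set ψ := deriv ρ with hψdef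
  -- ψ is monotone
  have hψmono : Monotone ψ := by
    have h := hρconv.monotoneOn_deriv (fun y _ => hρdiff y)
    exact fun a b hab => h (Set.mem_univ a) (Set.mem_univ b) hab
  -- deriv ψ is nonneg
  have hψ'nonneg : ∀ y, 0 ≤ deriv ψ y := by
    intro y
    have hd : HasDerivAt ψ (deriv ψ y) y := (hρdiff2 y).hasDerivAt
    have ht : Tendsto (slope ψ y) (𝓝[>] y) (𝓝 (deriv ψ y)) :=
      (hasDerivAt_iff_tendsto_slope.mp hd).mono_left
        (nhdsWithin_mono y fun z hz => ne_of_gt hz)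
    refine ge_of_tendsto ht ?_
    filter_upwards [self_mem_nhdsWithin] with z hz
    rw [slope_def_field]
    have h1 : (0:ℝ) < z - y := sub_pos.mpr hz
    have h2 := hψmono (le_of_lt hz)
    rw [div_nonneg_iff]
    exact Or.inl ⟨by linarith, by linarith⟩
  -- main derivative statement
  have key : ∀ c : ℝ, 0 < c →
      HasDerivAt (fun c => ρ (P c))
        (-(ψ (P c)) ^ 2 / (1 + c * deriv ψ (P c))) c := by
    intro c₀ hc₀
    set y₀ := P c₀ with hy₀
    have e2 := hP c₀ hc₀
    -- Lipschitz bound for P near c₀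
    have hlip : ∀ c : ℝ, 0 < c → |P c - y₀| ≤ |ψ y₀| * |c - c₀| := by
      intro c hc
      have e1 := hP c hc
      have hdiff : (P c - y₀) + c * (ψ (P c) - ψ y₀) = -((c - c₀) * ψ y₀) := by
        linarith
      have habs : |(P c - y₀) + c * (ψ (P c) - ψ y₀)| ≤ |ψ y₀| * |c - c₀| := by
        rw [hdiff, abs_neg, abs_mul, mul_comm]
      refine le_trans ?_ habs
      rcases le_total y₀ (P c) with h | h
      · have hm := hψmono h
        have h1 : 0 ≤ P c - y₀ := sub_nonneg.mpr h
        have h2 : 0 ≤ c * (ψ (P c) - ψ y₀) := mul_nonneg hc.le (sub_nonneg.mpr hm)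
        rw [abs_of_nonneg h1, abs_of_nonneg (by linarith)]
        linarith
      · have hm := hψmono h
        have h1 : P c - y₀ ≤ 0 := sub_nonpos.mpr h
        have h2 : c * (ψ (P c) - ψ y₀) ≤ 0 :=
          mul_nonpos_of_nonneg_of_nonpos hc.le (sub_nonpos.mpr hm)
        rw [abs_of_nonpos h1, abs_of_nonpos (by linarith)]
        linarith
    -- continuity of P at c₀
    have hPc : Tendsto P (𝓝 c₀) (𝓝 y₀) := by
      rw [tendsto_iff_dist_tendsto_zero]
      have hbound : ∀ᶠ c in 𝓝 c₀, dist (P c) y₀ ≤ |ψ y₀| * |c - c₀| := by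
        filter_upwards [isOpen_Ioi.eventually_mem (Set.mem_Ioi.mpr hc₀)] with c hc
        simpa [Real.dist_eq] using hlip c hc
      have hg : Tendsto (fun c => |ψ y₀| * |c - c₀|) (𝓝 c₀) (𝓝 0) := by
        have : Tendsto (fun c : ℝ => |ψ y₀| * |c - c₀|) (𝓝 c₀)
            (𝓝 (|ψ y₀| * |c₀ - c₀|)) := by
          exact (continuous_const.mul ((continuous_id.sub continuous_const).abs)).tendsto c₀
        simpa using this
      exact squeeze_zero' (.of_forall fun c => dist_nonneg) hbound hg
    -- the updated slope function of ψ at y₀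
    set S : ℝ → ℝ := Function.update (fun y => (ψ y - ψ y₀) / (y - y₀)) y₀ (deriv ψ y₀)
      with hSdef
    have hScont : ContinuousAt S y₀ := (hρdiff2 y₀).hasDerivAt.continuousAt_div
    have hSid : ∀ y, ψ y - ψ y₀ = S y * (y - y₀) := by
      intro y
      by_cases hy : y = y₀
      · subst hy; simp
      · have hne : y - y₀ ≠ 0 := sub_ne_zero.mpr hy
        rw [hSdef, Function.update_of_ne hy]
        field_simp
    have hSnn : ∀ y, 0 ≤ S y := by
      intro y
      by_cases hy : y = y₀
      · subst hy; simpa [hSdef] using hψ'nonneg y₀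
      · rw [hSdef, Function.update_of_ne hy]
        rcases lt_or_gt_of_ne hy with h | h
        · rw [div_nonneg_iff]
          exact Or.inr ⟨sub_nonpos.mpr (hψmono h.le), sub_nonpos.mpr h.le⟩
        · exact div_nonneg (sub_nonneg.mpr (hψmono h.le)) (sub_nonneg.mpr h.le)
    have hkey : ∀ c : ℝ, 0 < c →
        (P c - y₀) * (1 + c * S (P c)) = -((c - c₀) * ψ y₀) := by
      intro c hc
      have e1 := hP c hc
      have := hSid (P c)
      nlinarith [hSid (P c)]
    have hden : ∀ c : ℝ, 0 < c → (0:ℝ) < 1 + c * S (P c) := by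
      intro c hc
      have := mul_nonneg hc.le (hSnn (P c))
      linarith
    -- limit of the explicit slope expression
    have hSP : Tendsto (fun c => S (P c)) (𝓝 c₀) (𝓝 (deriv ψ y₀)) := by
      have := hScont.tendsto.comp hPc
      simpa [hSdef, Function.comp_def] using this
    have hdenlim : Tendsto (fun c => 1 + c * S (P c)) (𝓝 c₀) (𝓝 (1 + c₀ * deriv ψ y₀)) :=
      tendsto_const_nhds.add (tendsto_id.mul hSP)
    have hdenne : (1 : ℝ) + c₀ * deriv ψ y₀ ≠ 0 := by
      have := mul_nonneg hc₀.le (hψ'nonneg y₀)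
      nlinarith
    have hglim : Tendsto (fun c => -ψ y₀ / (1 + c * S (P c))) (𝓝 c₀)
        (𝓝 (-ψ y₀ / (1 + c₀ * deriv ψ y₀))) :=
      tendsto_const_nhds.div hdenlim hdenne
    -- P has the expected derivative
    have hP' : HasDerivAt P (-ψ y₀ / (1 + c₀ * deriv ψ y₀)) c₀ := by
      rw [hasDerivAt_iff_tendsto_slope]
      have heq : ∀ᶠ c in 𝓝[≠] c₀, (fun c => -ψ y₀ / (1 + c * S (P c))) c = slope P c₀ c := by
        have hpos : ∀ᶠ c in 𝓝[≠] c₀, (0:ℝ) < c :=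
          eventually_nhdsWithin_of_eventually_nhds
            (isOpen_Ioi.eventually_mem (Set.mem_Ioi.mpr hc₀))
        filter_upwards [hpos, self_mem_nhdsWithin] with c hc hne
        have h1 : (1:ℝ) + c * S (P c) ≠ 0 := (hden c hc).ne'
        have h2 : c - c₀ ≠ 0 := sub_ne_zero.mpr hne
        rw [slope_def_field, div_eq_div_iff h1 h2]
        linarith [hkey c hc]
      exact (hglim.mono_left nhdsWithin_le_nhds).congr' heq
    have hρd : HasDerivAt ρ (ψ y₀) y₀ := (hρdiff y₀).hasDerivAt
    have hcomp := hρd.comp c₀ hP'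
    have heqd : ψ y₀ * (-ψ y₀ / (1 + c₀ * deriv ψ y₀))
        = -(ψ y₀) ^ 2 / (1 + c₀ * deriv ψ y₀) := by
      ring
    rw [← heqd]
    exact hcomp
  refine ⟨key, ?_⟩
  have hint : interior (Set.Ioi (0:ℝ)) = Set.Ioi 0 := interior_Ioi
  refine antitoneOn_of_deriv_nonpos (convex_Ioi 0) ?_ ?_ ?_
  · intro c hc
    exact (key c hc).continuousAt.continuousWithinAt
  · rw [hint]
    intro c hc
    exact (key c hc).differentiableAt.differentiableWithinAt
  · rw [hint]
    intro c hc
    rw [(key c hc).deriv]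
    apply div_nonpos_of_nonpos_of_nonneg
    · simpa using sq_nonneg (ψ (P c))
    · have := mul_nonneg (le_of_lt hc) (hψ'nonneg (P c))
      linarith
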